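/- Let G be an n'-right regular bipartite graph, C' an MDS code of length n' and dimension k, and C = (G, C') a Tanner code. For any S ⊆ V1(G), the coordinate-projection map from C^{cl_G^k(S)} to C^S is a linear isomorphism. -/

import Mathlib

open Finset

def TStep {V1 V2 : Type*} [DecidableEq V1] (N : V2 → Finset V1) (k n' : ℕ)
    (Z Z' : Finset V1) : Prop :=
  ∃ u : V2, k ≤ (N u ∩ Z).card ∧ (N u ∩ Z).card < n' ∧ Z' = Z ∪ N u

def TTerminal {V1 V2 : Type*} [DecidableEq V1] (N : V2 → Finset V1) (k n' : ℕ)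
    (S Z : Finset V1) : Prop :=
  Relation.ReflTransGen (TStep N k n') S Z ∧ ∀ Z', ¬ TStep N k n' Z Z'


/-- `C ≤ F^{V1}` is a Tanner code with component code `C' ≤ F^{N'}` for the bipartite graph
with neighborhoods `N : V2 → Finset V1`: for each constraint vertex `u` there is a code
monomially equivalent to `C'` (encoded by a bijection `e : N(u) ≃ N'` together with nonzero
scalars) containing the projection of `C` onto `N(u)`. -/
def IsTannerCode {V1 V2 N' : Type*} [DecidableEq V1] (F : Type*) [Field F]
    (N : V2 → Finset V1) (C : Submodule F (V1 → F)) (C' : Submodule F (N' → F)) : Prop :=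
  ∀ u : V2, ∃ (e : {v // v ∈ N u} ≃ N') (lam : N' → F), (∀ i, lam i ≠ 0) ∧
    ∀ c ∈ C, (fun i : N' => lam i * c (e.symm i : V1)) ∈ C'

/-- An `[n', k]` MDS code: dimension `k` and every nonzero codeword has weight at least
`n' - k + 1`. -/
def IsMDS {N' : Type*} [Fintype N'] (F : Type*) [Field F] [DecidableEq F]
    (C' : Submodule F (N' → F)) (n' k : ℕ) : Prop :=
  Fintype.card N' = n' ∧ Module.finrank F C' = k ∧
    ∀ x ∈ C', x ≠ 0 → n' - k + 1 ≤ (Finset.univ.filter fun i => x i ≠ 0).card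

lemma tstep_subset {V1 V2 : Type*} [DecidableEq V1] {N : V2 → Finset V1} {k n' : ℕ}
    {Z Z' : Finset V1} (h : TStep N k n' Z Z') : Z ⊆ Z' := by
  obtain ⟨u, -, -, rfl⟩ := h; exact Finset.subset_union_left

lemma rtg_subset {V1 V2 : Type*} [DecidableEq V1] {N : V2 → Finset V1} {k n' : ℕ}
    {S T : Finset V1} (h : Relation.ReflTransGen (TStep N k n') S T) : S ⊆ T := by
  induction h with
  | refl => exact subset_rfl
  | tail _ hstep ih => exact ih.trans (tstep_subset hstep)

lemma zero_prop {V1 V2 N' : Type*} [DecidableEq V1] [Fintype N']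
    (F : Type*) [Field F] [DecidableEq F]
    (N : V2 → Finset V1) (n' k : ℕ) (hk : k ≤ n')
    (C' : Submodule F (N' → F)) (hMDS : IsMDS F C' n' k)
    (C : Submodule F (V1 → F)) (hTan : IsTannerCode F N C C')
    {S T : Finset V1} (hST : Relation.ReflTransGen (TStep N k n') S T)
    {c : V1 → F} (hc : c ∈ C) (h0 : ∀ v ∈ S, c v = 0) : ∀ v ∈ T, c v = 0 := by
  induction hST with
  | refl => exact h0
  | @tail Z Z' _ hstep ih =>
    obtain ⟨u, hkZ, -, rfl⟩ := hstep
    intro v hv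
    rcases Finset.mem_union.mp hv with h | h
    · exact ih v h
    · obtain ⟨e, lam, hlam, hCC'⟩ := hTan u
      set w : N' → F := fun i => lam i * c (e.symm i) with hw
      have hwC' : w ∈ C' := hCC' c hc
      have hzero : ∀ i : N', ((e.symm i : V1) ∈ Z) → w i = 0 := by
        intro i hi
        simp [hw, ih _ hi]
      have hcard : (N u ∩ Z).card
          = (Finset.univ.filter fun i : N' => (e.symm i : V1) ∈ Z).card := by
        refine Finset.card_bij
          (fun a ha => e ⟨a, (Finset.mem_inter.mp ha).1⟩) ?_ ?_ ?_
        · intro a ha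
          simp [(Finset.mem_inter.mp ha).2]
        · intro a ha b hb hab
          have := e.injective hab
          exact congrArg Subtype.val this
        · intro i hi
          refine ⟨(e.symm i : V1), ?_, ?_⟩
          · exact Finset.mem_inter.mpr ⟨(e.symm i).2, (Finset.mem_filter.mp hi).2⟩
          · simp
      have hwsupp : (Finset.univ.filter fun i : N' => w i ≠ 0).card ≤ n' - k := by
        have hsub : (Finset.univ.filter fun i : N' => w i ≠ 0)
            ⊆ (Finset.univ.filter fun i : N' => ¬ ((e.symm i : V1) ∈ Z)) := by
          intro i hi
          simp only [Finset.mem_filter, Finset.mem_univ, true_and] at hi ⊢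
          intro hiZ; exact hi (hzero i hiZ)
        have h1 := Finset.card_le_card hsub
        have h2 := Finset.card_filter_add_card_filter_not
          (s := (Finset.univ : Finset N')) (p := fun i : N' => (e.symm i : V1) ∈ Z)
        rw [Finset.card_univ] at h2
        have hk' : k ≤ (Finset.univ.filter fun i : N' => (e.symm i : V1) ∈ Z).card :=
          hcard ▸ hkZ
        have hcN : Fintype.card N' = n' := hMDS.1
        omega
      have hw0 : w = 0 := by
        by_contra hne
        have := hMDS.2.2 w hwC' hne
        omega
      have := congrFun hw0 (e ⟨v, h⟩)
      simp only [hw, Equiv.symm_apply_apply, Pi.zero_apply] at this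
      exact (mul_eq_zero.mp this).resolve_left (hlam _)

/-- for a Tanner code `C = (G, C')` with `C'` an `[n',k]` MDS code, and any
`S ⊆ V1(G)` with `k`-closure `T = cl_G^k(S)`, the coordinate projection from `C^T` to `C^S`
is a linear isomorphism. -/
theorem projection_closure_isomorphism {V1 V2 N' : Type*} [Fintype V1] [DecidableEq V1]
    [Fintype V2] [Fintype N'] (F : Type*) [Field F] [Fintype F] [DecidableEq F]
    (N : V2 → Finset V1) (n' k : ℕ) (hreg : ∀ u : V2, (N u).card = n') (hk : k ≤ n')
    (C' : Submodule F (N' → F)) (hMDS : IsMDS F C' n' k)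
    (C : Submodule F (V1 → F)) (hTan : IsTannerCode F N C C')
    (S T : Finset V1) (hT : TTerminal N k n' S T) :
    ∃ e : (C.map (LinearMap.funLeft F F (fun v : {v // v ∈ T} => (v : V1)))) ≃ₗ[F]
          (C.map (LinearMap.funLeft F F (fun v : {v // v ∈ S} => (v : V1)))),
      ∀ (x : C.map (LinearMap.funLeft F F (fun v : {v // v ∈ T} => (v : V1))))
        (v : {v // v ∈ S}) (hv : (v : V1) ∈ T),
        (e x : {v // v ∈ S} → F) v = (x : {v // v ∈ T} → F) ⟨v, hv⟩ := by
  obtain ⟨hrtg, -⟩ := hT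
  have hsub : S ⊆ T := rtg_subset hrtg
  set fT : (V1 → F) →ₗ[F] ({v // v ∈ T} → F) :=
    LinearMap.funLeft F F (fun v : {v // v ∈ T} => (v : V1)) with hfT
  set fS : (V1 → F) →ₗ[F] ({v // v ∈ S} → F) :=
    LinearMap.funLeft F F (fun v : {v // v ∈ S} => (v : V1)) with hfS
  set r : ({v // v ∈ T} → F) →ₗ[F] ({v // v ∈ S} → F) :=
    LinearMap.funLeft F F (fun v : {v // v ∈ S} => (⟨v, hsub v.2⟩ : {v // v ∈ T})) with hr
  have hcomm : ∀ c : V1 → F, r (fT c) = fS c := by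
    intro c; funext v; rfl
  have hmaps : ∀ x ∈ C.map fT, r x ∈ C.map fS := by
    rintro x ⟨c, hc, rfl⟩
    exact ⟨c, hc, (hcomm c).symm ▸ rfl⟩
  set φ : (C.map fT) →ₗ[F] (C.map fS) := r.restrict hmaps with hφ
  have hbij : Function.Bijective φ := by
    constructor
    · rintro ⟨x, hx⟩ ⟨y, hy⟩ hxy
      obtain ⟨c, hc, rfl⟩ := hx
      obtain ⟨d, hd, rfl⟩ := hy
      have hxy' : r (fT c) = r (fT d) := congrArg Subtype.val hxy
      have hS0 : ∀ v ∈ S, (c - d) v = 0 := by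
        intro v hvS
        have := congrFun hxy' ⟨v, hvS⟩
        exact sub_eq_zero.mpr this
      have hT0 : ∀ v ∈ T, (c - d) v = 0 :=
        zero_prop F N n' k hk C' hMDS C hTan hrtg (C.sub_mem hc hd) hS0
      ext v
      have := hT0 v v.2
      exact sub_eq_zero.mp this
    · rintro ⟨y, hy⟩
      obtain ⟨c, hc, rfl⟩ := hy
      exact ⟨⟨fT c, ⟨c, hc, rfl⟩⟩, Subtype.ext (hcomm c)⟩
  refine ⟨LinearEquiv.ofBijective φ hbij, ?_⟩
  intro x v hv
  rfl
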